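/- For every signed permutation π of {±1,…,±n} and every k with 1 ≤ k ≤ n, the width-k type-B inversion number of π equals the sum over all m ≥ 1 of the number of width-mk descents of π plus the number of width-mk negative descents of π; that is, inv_k^B(π) = Σ_{m≥1} (des_{mk}^B(π) + ndes_{mk}^B(π)). -/

import Mathlib

open Finset

/-- The value function of the signed permutation determined by `σ` and sign vector `ε`:
`bval n σ ε i` is `π(i)` for `i ∈ {-n,…,n}`, with `π(0) = 0` and `π(-i) = -π(i)`. -/
def bval (n : ℕ) (σ : Equiv.Perm (Fin n)) (ε : Fin n → Bool) : ℤ → ℤ := fun i =>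
  if h : 1 ≤ i.natAbs ∧ i.natAbs ≤ n then
    (Int.sign i) *
      (if ε ⟨i.natAbs - 1, by omega⟩ then -((((σ ⟨i.natAbs - 1, by omega⟩ : Fin n) : ℕ) : ℤ) + 1)
       else (((σ ⟨i.natAbs - 1, by omega⟩ : Fin n) : ℕ) : ℤ) + 1)
  else 0

/-- width-`k` type-B descent number: `#{0 ≤ i ≤ n-k : π(i) > π(i+k)}`, `π(0)=0`. -/
def desB (n k : ℕ) (π : ℤ → ℤ) : ℕ :=
  ((range (n - k + 1)).filter fun i : ℕ => π i > π ((i : ℤ) + k)).card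

/-- width-`k` type-A descent number: `#{1 ≤ i ≤ n-k : π(i) > π(i+k)}`. -/
def desA (n k : ℕ) (π : ℤ → ℤ) : ℕ :=
  ((Icc 1 (n - k)).filter fun i : ℕ => π i > π ((i : ℤ) + k)).card

/-- width-`k` negative descent number: `#{1 ≤ i ≤ n-k : π(-i) > π(i+k)}`. -/
def ndesB (n k : ℕ) (π : ℤ → ℤ) : ℕ :=
  ((Icc 1 (n - k)).filter fun i : ℕ => π (-(i : ℤ)) > π ((i : ℤ) + k)).card

/-- width-`k` inversion number: pairs `i < j` in `[n]` with `j - i` a positive multiple of `k`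
and `π(i) > π(j)`. -/
def invAk (n k : ℕ) (π : ℤ → ℤ) : ℕ :=
  (((Icc 1 n) ×ˢ (Icc 1 n)).filter fun p : ℕ × ℕ =>
    p.1 < p.2 ∧ k ∣ (p.2 - p.1) ∧ π p.1 > π p.2).card

/-- width-`k` negative-entry statistic: `#{1 ≤ i ≤ ⌊n/k⌋ : π(ik) < 0}`. -/
def negk (n k : ℕ) (π : ℤ → ℤ) : ℕ :=
  ((Icc 1 (n / k)).filter fun i : ℕ => π ((i : ℤ) * k) < 0).card

/-- width-`k` negative-sum-pair statistic. -/
def nspk (n k : ℕ) (π : ℤ → ℤ) : ℕ :=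
  (((Icc 1 n) ×ˢ (Icc 1 n)).filter fun p : ℕ × ℕ =>
    p.1 < p.2 ∧ k ∣ (p.2 - p.1) ∧ π p.1 + π p.2 < 0).card

/-- width-`k` type-B inversion number. -/
def invBk (n k : ℕ) (π : ℤ → ℤ) : ℕ := invAk n k π + negk n k π + nspk n k π

/-- Proposition 4: for any signed permutation `π ∈ B_n` and `1 ≤ k ≤ n`,
`inv_k^B(π) = Σ_{m ≥ 1} (des_{mk}^B(π) + ndes_{mk}^B(π))`; all terms with `m > n` vanish,
so the sum is taken over `1 ≤ m ≤ n`. -/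

lemma split_card (n k : ℕ) (hk : 1 ≤ k) (P : ℕ → ℕ → Prop) [DecidableRel P] :
    (((Icc 1 n) ×ˢ (Icc 1 n)).filter fun p : ℕ × ℕ =>
      p.1 < p.2 ∧ k ∣ (p.2 - p.1) ∧ P p.1 p.2).card
    = ∑ m ∈ Icc 1 n, ((Icc 1 (n - m * k)).filter fun i => P i (i + m * k)).card := by
  rw [Finset.card_eq_sum_card_fiberwise (f := fun p : ℕ × ℕ => (p.2 - p.1) / k)
    (t := Icc 1 n) ?mem]
  case mem =>
    intro p hp
    simp only [Finset.mem_coe, mem_filter, mem_product, mem_Icc] at hp ⊢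
    obtain ⟨⟨⟨h1, h2⟩, h3, h4⟩, h5, ⟨c, hc⟩, _⟩ := hp
    constructor
    · rw [hc, Nat.mul_div_cancel_left _ hk]
      rcases Nat.eq_zero_or_pos c with rfl | hc1
      · omega
      · exact hc1
    · calc (p.2 - p.1) / k ≤ p.2 - p.1 := Nat.div_le_self _ _
        _ ≤ n := by omega
  refine Finset.sum_congr rfl fun m hm => ?_
  simp only [mem_Icc] at hm
  apply Finset.card_nbij' (fun p => p.1) (fun i => (i, i + m * k))
  · intro p hp
    simp only [Finset.mem_coe, mem_filter, mem_product, mem_Icc] at hp ⊢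
    obtain ⟨⟨⟨⟨h1, h2⟩, h3, h4⟩, h5, ⟨c, hc⟩, hP⟩, hf⟩ := hp
    have hc' : p.2 - p.1 = c * k := by rw [hc, Nat.mul_comm]
    have hc0 : 0 < c := by
      rcases Nat.eq_zero_or_pos c with rfl | h
      · simp at hc'; omega
      · exact h
    have hcm : c = m := by rw [← hf, hc, Nat.mul_div_cancel_left _ hk]
    subst hcm
    have hp2 : p.2 = p.1 + c * k := by omega
    refine ⟨⟨h1, by omega⟩, ?_⟩
    rwa [← hp2]
  · intro i hi
    simp only [Finset.mem_coe, mem_filter, mem_product, mem_Icc] at hi ⊢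
    obtain ⟨⟨h1, h2⟩, hP⟩ := hi
    have hmk : 0 < m * k := Nat.mul_pos (by omega) hk
    have hsub : i + m * k - i = m * k := by omega
    refine ⟨⟨⟨⟨h1, by omega⟩, by omega, by omega⟩, by omega,
      ⟨m, by rw [hsub, Nat.mul_comm]⟩, hP⟩, ?_⟩
    rw [hsub, Nat.mul_div_cancel _ hk]
  · intro p hp
    simp only [Finset.mem_coe, mem_filter, mem_product, mem_Icc] at hp
    obtain ⟨⟨⟨⟨h1, h2⟩, h3, h4⟩, h5, ⟨c, hc⟩, hP⟩, hf⟩ := hp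
    have hc' : p.2 - p.1 = c * k := by rw [hc, Nat.mul_comm]
    have hcm : c = m := by rw [← hf, hc, Nat.mul_div_cancel_left _ hk]
    subst hcm
    exact Prod.ext rfl (by dsimp only; omega)
  · intro i _
    rfl

lemma bval_zero (n : ℕ) (σ : Equiv.Perm (Fin n)) (ε : Fin n → Bool) : bval n σ ε 0 = 0 := by
  simp [bval]

lemma bval_neg' (n : ℕ) (σ : Equiv.Perm (Fin n)) (ε : Fin n → Bool) (x : ℤ) :
    bval n σ ε (-x) = - bval n σ ε x := by
  unfold bval
  simp only [Int.natAbs_neg, Int.sign_neg]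
  split_ifs <;> ring

lemma bval_big (n : ℕ) (σ : Equiv.Perm (Fin n)) (ε : Fin n → Bool) (x : ℤ)
    (hx : n < x.natAbs) : bval n σ ε x = 0 := by
  unfold bval
  rw [dif_neg (by omega)]

theorem stmt0 (n k : ℕ) (hk : 1 ≤ k) (hkn : k ≤ n)
    (σ : Equiv.Perm (Fin n)) (ε : Fin n → Bool) :
    invBk n k (bval n σ ε) =
      ∑ m ∈ Finset.Icc 1 n,
        (desB n (m * k) (bval n σ ε) + ndesB n (m * k) (bval n σ ε)) := by
  set π := bval n σ ε with hπ
  have hA : invAk n k π = ∑ m ∈ Icc 1 n, desA n (m * k) π := by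
    rw [invAk, split_card n k hk (fun a b => π (a:ℤ) > π (b:ℤ))]
    refine Finset.sum_congr rfl fun m _ => ?_
    unfold desA
    congr 1
  have hN : nspk n k π = ∑ m ∈ Icc 1 n, ndesB n (m * k) π := by
    rw [nspk, split_card n k hk (fun a b => π (a:ℤ) + π (b:ℤ) < 0)]
    refine Finset.sum_congr rfl fun m _ => ?_
    unfold ndesB
    congr 1
    apply Finset.filter_congr
    intro i _
    rw [hπ, bval_neg']
    push_cast
    constructor <;> intro h <;> linarith
  have hD : ∀ K : ℕ, desB n K π = desA n K π + (if π (K : ℤ) < 0 then 1 else 0) := by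
    intro K
    unfold desB desA
    have hr : range (n - K + 1) = insert 0 (Icc 1 (n - K)) := by
      ext j
      simp only [mem_range, mem_insert, mem_Icc]
      omega
    rw [hr, Finset.filter_insert]
    have h0 : (π ((0:ℕ):ℤ) > π (((0:ℕ):ℤ) + (K:ℤ))) ↔ π (K:ℤ) < 0 := by
      rw [hπ]
      rw [Nat.cast_zero, zero_add, bval_zero]
    split_ifs with h1 h2 h2
    · rw [Finset.card_insert_of_notMem (by simp)]
    · exact absurd (h0.mp h1) h2
    · exact absurd (h0.mpr h2) h1
    · rfl
  have hG : negk n k π = ∑ m ∈ Icc 1 n, (if π (((m * k : ℕ)) : ℤ) < 0 then 1 else 0) := by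
    rw [negk, ← Finset.card_filter]
    congr 1
    ext i
    simp only [mem_filter, mem_Icc]
    constructor
    · rintro ⟨⟨h1, h2⟩, h3⟩
      refine ⟨⟨h1, le_trans h2 (Nat.div_le_self n k)⟩, ?_⟩
      push_cast
      exact h3
    · rintro ⟨⟨h1, h2⟩, h3⟩
      have hle : i * k ≤ n := by
        by_contra hgt
        push_neg at hgt
        have hz : π ((i * k : ℕ) : ℤ) = 0 := by
          rw [hπ]
          exact bval_big n σ ε _ (by simpa [Int.natAbs_mul] using hgt)
        rw [hz] at h3
        exact absurd h3 (lt_irrefl 0)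
      refine ⟨⟨h1, (Nat.le_div_iff_mul_le hk).mpr hle⟩, ?_⟩
      push_cast at h3 ⊢
      exact h3
  rw [invBk, hA, hN, hG, ← Finset.sum_add_distrib, ← Finset.sum_add_distrib]
  refine Finset.sum_congr rfl fun m hm => ?_
  rw [hD (m * k)]
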